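/- Let ε ∈ (0,1/5], d ∈ ℕ, let Q be a Borel probability measure on [0,1]^d, and let η₁, η₂: [0,1]^d → [ε, 3ε] be Borel measurable. Then KL(P_{η₁,Q} ‖ P_{η₂,Q}) ≤ 9ε. -/

import Mathlib

open MeasureTheory
open scoped ENNReal NNReal

namespace DNNLogistic

noncomputable section

/-- The unit cube `[0,1]^d` as a subset of `ℝ^d`. -/
def cube (d : ℕ) : Set (Fin d → ℝ) := {x | ∀ i, x i ∈ Set.Icc (0 : ℝ) 1}

/-- The logistic loss `φ(t) = log (1 + e^{-t})`. -/
def logLoss (t : ℝ) : ℝ := Real.log (1 + Real.exp (-t))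

/-- `sgn(t) = 1` if `t ≥ 0`, `sgn(t) = -1` otherwise. -/
def rsgn (t : ℝ) : ℝ := if 0 ≤ t then 1 else -1

/-- The Euclidean distance `‖x - z‖₂` on `ℝ^m`. -/
def eucDist {m : ℕ} (x z : Fin m → ℝ) : ℝ := Real.sqrt (∑ i, (x i - z i) ^ 2)

/-- The logistic risk `R^φ_{η,Q}(f)` of `f` with respect to the conditional probability
function `η` and the marginal distribution `Q` on `[0,1]^d`. -/
def logRisk (d : ℕ) (Q : Measure (Fin d → ℝ)) (η f : (Fin d → ℝ) → ℝ) : ℝ :=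
  ∫ x, (η x * logLoss (f x) + (1 - η x) * logLoss (-f x)) ∂Q

/-- The infimum of the logistic risk over all Borel measurable real-valued functions. -/
def infLogRisk (d : ℕ) (Q : Measure (Fin d → ℝ)) (η : (Fin d → ℝ) → ℝ) : ℝ :=
  sInf {t | ∃ g : (Fin d → ℝ) → ℝ, Measurable g ∧ t = logRisk d Q η g}

/-- The excess logistic risk `E^φ_{η,Q}(f)`. -/
def excessLogRisk (d : ℕ) (Q : Measure (Fin d → ℝ)) (η f : (Fin d → ℝ) → ℝ) : ℝ :=
  logRisk d Q η f - infLogRisk d Q η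

/-- The misclassification risk `R_{η,Q}(f)`; note `1{sgn(f x) = -1} = 1{f x < 0}` and
`1{sgn(f x) = 1} = 1{0 ≤ f x}`. -/
def misRisk (d : ℕ) (Q : Measure (Fin d → ℝ)) (η f : (Fin d → ℝ) → ℝ) : ℝ :=
  ∫ x, (η x * (if f x < 0 then (1 : ℝ) else 0)
      + (1 - η x) * (if 0 ≤ f x then (1 : ℝ) else 0)) ∂Q

/-- The infimum of the misclassification risk over all Borel measurable functions. -/
def infMisRisk (d : ℕ) (Q : Measure (Fin d → ℝ)) (η : (Fin d → ℝ) → ℝ) : ℝ :=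
  sInf {t | ∃ g : (Fin d → ℝ) → ℝ, Measurable g ∧ t = misRisk d Q η g}

/-- The excess misclassification error `E_{η,Q}(f)`. -/
def excessMisRisk (d : ℕ) (Q : Measure (Fin d → ℝ)) (η f : (Fin d → ℝ) → ℝ) : ℝ :=
  misRisk d Q η f - infMisRisk d Q η

/-- The joint distribution `P_{η,Q}` on `ℝ^d × ℝ`: the marginal on the first factor is `Q`,
and the conditional distribution of the label given `x` puts mass `η x` on `1` and mass
`1 - η x` on `-1`.  It satisfies `P_{η,Q}(S) = ∫ (η x • 1_S(x,1) + (1 - η x) • 1_S(x,-1)) dQ`. -/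
def PeQ (d : ℕ) (Q : Measure (Fin d → ℝ)) (η : (Fin d → ℝ) → ℝ) :
    Measure ((Fin d → ℝ) × ℝ) :=
  (Q.withDensity fun x => ENNReal.ofReal (η x)).map (fun x => (x, (1 : ℝ)))
    + (Q.withDensity fun x => ENNReal.ofReal (1 - η x)).map (fun x => (x, (-1 : ℝ)))

/-- The logistic risk `R^φ_P(f)` with respect to a joint distribution `P` on
`[0,1]^d × {-1,1}`. -/
def jointLogRisk (d : ℕ) (P : Measure ((Fin d → ℝ) × ℝ)) (f : (Fin d → ℝ) → ℝ) : ℝ :=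
  ∫ z, logLoss (z.2 * f z.1) ∂P

/-- The Lebesgue measure on the cube `[0,1]^d`. -/
def cubeVolume (d : ℕ) : Measure (Fin d → ℝ) := volume.restrict (cube d)

/-- The `n`-fold product measure `P^{⊗n}` on the sample space. -/
def nSample (d n : ℕ) (P : Measure ((Fin d → ℝ) × ℝ)) :
    Measure (Fin n → (Fin d → ℝ) × ℝ) :=
  Measure.pi fun _ => P

/-- `fhat` is an empirical logistic-risk minimizer over the class `Fcls` from samples of
size `n`: it is jointly Borel measurable, and for every sample
`z ∈ ([0,1]^d × {-1,1})^n` the function `fhat z` belongs to `Fcls` and minimizes the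
empirical logistic risk over `Fcls`. -/
def IsERM (d n : ℕ) (Fcls : Set ((Fin d → ℝ) → ℝ))
    (fhat : (Fin n → (Fin d → ℝ) × ℝ) → (Fin d → ℝ) → ℝ) : Prop :=
  Measurable (fun p : (Fin n → (Fin d → ℝ) × ℝ) × (Fin d → ℝ) => fhat p.1 p.2) ∧
  ∀ z : Fin n → (Fin d → ℝ) × ℝ, (∀ i, z i ∈ (cube d) ×ˢ ({-1, 1} : Set ℝ)) →
    fhat z ∈ Fcls ∧
    ∀ f ∈ Fcls,
      ∑ i, logLoss ((z i).2 * fhat z ((z i).1)) ≤ ∑ i, logLoss ((z i).2 * f ((z i).1))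

/-- The successive hidden layers of a fully connected ReLU network:
`u₀ = x` and `u_{k+1} = σ_{v_{k+1}}(W_k u_k)`. -/
def fnnHidden (m : ℕ → ℕ) (W : ∀ k : ℕ, Matrix (Fin (m (k + 1))) (Fin (m k)) ℝ)
    (v : ∀ k : ℕ, Fin (m k) → ℝ) : (k : ℕ) → (Fin (m 0) → ℝ) → (Fin (m k) → ℝ)
  | 0 => fun x => x
  | (k + 1) => fun x j => max ((W k).mulVec (fnnHidden m W v k x) j - v (k + 1) j) 0

/-- `f ∈ F^FNN_d(G, N, S, B, F)`: `f : ℝ^d → ℝ` is realized by a fully connected ReLU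
network `x ↦ W_L σ_{v_L} W_{L-1} ⋯ W_1 σ_{v_1} W_0 x` with depth `L ≤ G`, hidden widths
at most `N`, at most `S` nonzero entries among all weight matrices and bias vectors, all
entries bounded by `B` in absolute value, and `sup_{x ∈ [0,1]^d} |f x| ≤ F`. -/
def IsFNN (d : ℕ) (G N S B : ℝ) (F : ℝ≥0∞) (f : (Fin d → ℝ) → ℝ) : Prop :=
  ∃ (L : ℕ) (m : ℕ → ℕ) (W : ∀ k : ℕ, Matrix (Fin (m (k + 1))) (Fin (m k)) ℝ)
    (v : ∀ k : ℕ, Fin (m k) → ℝ) (hm0 : m 0 = d) (hmL : m (L + 1) = 1),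
    1 ≤ L ∧ (L : ℝ) ≤ G ∧
    (∀ k : ℕ, 1 ≤ k → k ≤ L → (m k : ℝ) ≤ N) ∧
    (((∑ k ∈ Finset.range (L + 1),
          Set.ncard {p : Fin (m (k + 1)) × Fin (m k) | W k p.1 p.2 ≠ 0}) +
        (∑ k ∈ Finset.Icc 1 L, Set.ncard {j : Fin (m k) | v k j ≠ 0}) : ℝ) ≤ S) ∧
    (∀ k : ℕ, k ≤ L → ∀ i j, |W k i j| ≤ B) ∧
    (∀ k : ℕ, 1 ≤ k → k ≤ L → ∀ j, |v k j| ≤ B) ∧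
    (∀ x ∈ cube d, ENNReal.ofReal |f x| ≤ F) ∧
    (∀ x : Fin d → ℝ,
      f x = (W L).mulVec (fnnHidden m W v L fun i => x (Fin.cast hm0 i)) (Fin.cast hmL.symm 0))

/-- The partial derivative (within the cube) of `f` in the `i`-th coordinate direction. -/
def pderivW (m : ℕ) (i : Fin m) (f : (Fin m → ℝ) → ℝ) : (Fin m → ℝ) → ℝ :=
  fun x => fderivWithin ℝ f (cube m) x (Pi.single i 1)

/-- The iterated partial derivative of `f` along the list of coordinate directions `l`. -/
def derivListW (m : ℕ) : List (Fin m) → ((Fin m → ℝ) → ℝ) → ((Fin m → ℝ) → ℝ)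
  | [], f => f
  | (i :: l), f => derivListW m l (pderivW m i f)

/-- Membership in the Hölder ball `B^β_r([0,1]^m)`: with `k = ⌈β⌉ - 1` and
`λ = β - ⌈β⌉ + 1`, `f` has continuous partial derivatives (within the cube) up to order
`k`, and the maximum of the sup-norms of its derivatives of order at most `k` plus the
maximum of the Hölder-`λ` seminorms of its derivatives of order `k` is at most `r`. -/
def MemHolderBall (m : ℕ) (β r : ℝ) (f : (Fin m → ℝ) → ℝ) : Prop :=
  (∀ l : List (Fin m), l.length < ⌈β⌉₊ - 1 →
    DifferentiableOn ℝ (derivListW m l f) (cube m)) ∧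
  (∀ l : List (Fin m), l.length ≤ ⌈β⌉₊ - 1 →
    ContinuousOn (derivListW m l f) (cube m)) ∧
  ∃ A Bc : ℝ, A + Bc ≤ r ∧
    (∀ l : List (Fin m), l.length ≤ ⌈β⌉₊ - 1 → ∀ x ∈ cube m, |derivListW m l f x| ≤ A) ∧
    (∀ l : List (Fin m), l.length = ⌈β⌉₊ - 1 → ∀ x ∈ cube m, ∀ z ∈ cube m, x ≠ z →
      |derivListW m l f x - derivListW m l f z| ≤ Bc * eucDist x z ^ (β - (⌈β⌉₊ : ℝ) + 1))

/-- `f ∈ G^M_d(dmax)`: on `[0,1]^d`, `f` computes the maximum of at most `dmax` of its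
input coordinates. -/
def GM (d dmax : ℕ) (f : (Fin d → ℝ) → ℝ) : Prop :=
  ∃ (I : Finset (Fin d)) (hI : I.Nonempty), I.card ≤ dmax ∧
    ∀ x ∈ cube d, f x = I.sup' hI fun i => x i

/-- `f ∈ G^H_d(dstar, β, r)`: on `[0,1]^d`, `f` depends on exactly `dstar` of its input
coordinates, through a function in the Hölder ball `B^β_r([0,1]^{dstar})`. -/
def GH (d dstar : ℕ) (β r : ℝ) (f : (Fin d → ℝ) → ℝ) : Prop :=
  ∃ (I : Finset (Fin d)) (hI : I.card = dstar) (g : (Fin dstar → ℝ) → ℝ),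
    MemHolderBall dstar β r g ∧
    ∀ x ∈ cube d, f x = g fun j => x ↑(I.orderIsoOfFin hI j)

/-- Iterated composition `h_{n-1} ∘ ⋯ ∘ h_1 ∘ h_0` of a chain of maps with varying
dimensions `D : ℕ → ℕ`. -/
def depChain (D : ℕ → ℕ) (h : ∀ i : ℕ, (Fin (D i) → ℝ) → (Fin (D (i + 1)) → ℝ)) :
    (n : ℕ) → (Fin (D 0) → ℝ) → (Fin (D n) → ℝ)
  | 0 => fun x => x
  | (n + 1) => fun x => h n (depChain D h n x)

/-- `f ∈ G^CHOM_d(q, K, dmax, dstar, β, r)`: on `[0,1]^d`, `f` is a composition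
`h_q ∘ ⋯ ∘ h_0` where `h_0 : [0,1]^d → [0,1]^K`, `h_i : [0,1]^K → [0,1]^K` for
`0 < i < q`, `h_q : [0,1]^{d or K} → ℝ`, and each coordinate function of each `h_i`
belongs to `G^H(dstar, β, r) ∪ G^M(dmax)`. -/
def GCHOM (q d dmax dstar K : ℕ) (β r : ℝ) (f : (Fin d → ℝ) → ℝ) : Prop :=
  ∃ (D : ℕ → ℕ) (h : ∀ i : ℕ, (Fin (D i) → ℝ) → (Fin (D (i + 1)) → ℝ))
    (hD0 : D 0 = d) (hDq : D (q + 1) = 1),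
    (∀ i : ℕ, 1 ≤ i → i ≤ q → D i = K) ∧
    (∀ i : ℕ, i ≤ q → ∀ j : Fin (D (i + 1)),
      GH (D i) dstar β r (fun x => h i x j) ∨ GM (D i) dmax (fun x => h i x j)) ∧
    (∀ i : ℕ, i < q → ∀ x ∈ cube (D i), h i x ∈ cube (D (i + 1))) ∧
    (∀ x ∈ cube d,
      f x = depChain D h (q + 1) (fun i => x (Fin.cast hD0 i)) (Fin.cast hDq.symm 0))

/-- `f ∈ G^CH_d(q, K, dstar, β, r)`: as `G^CHOM`, but every coordinate function belongs
to `G^H(dstar, β, r)`. -/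
def GCH (q d dstar K : ℕ) (β r : ℝ) (f : (Fin d → ℝ) → ℝ) : Prop :=
  ∃ (D : ℕ → ℕ) (h : ∀ i : ℕ, (Fin (D i) → ℝ) → (Fin (D (i + 1)) → ℝ))
    (hD0 : D 0 = d) (hDq : D (q + 1) = 1),
    (∀ i : ℕ, 1 ≤ i → i ≤ q → D i = K) ∧
    (∀ i : ℕ, i ≤ q → ∀ j : Fin (D (i + 1)), GH (D i) dstar β r (fun x => h i x j)) ∧
    (∀ i : ℕ, i < q → ∀ x ∈ cube (D i), h i x ∈ cube (D (i + 1))) ∧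
    (∀ x ∈ cube d,
      f x = depChain D h (q + 1) (fun i => x (Fin.cast hD0 i)) (Fin.cast hDq.symm 0))

/-- The sup-norm over the cube of the (componentwise) difference of two vector-valued
functions. -/
def supDiffVec (m k : ℕ) (g g' : (Fin m → ℝ) → (Fin k → ℝ)) : ℝ :=
  sSup {t | ∃ x ∈ cube m, ∃ j : Fin k, t = |g x j - g' x j|}

/-- The binary entropy function `H`. -/
def entH (t : ℝ) : ℝ :=
  if t = 0 ∨ t = 1 then 0 else t * Real.log (1 / t) + (1 - t) * Real.log (1 / (1 - t))

/-- `sup { 1/(2(2 + e^t + e^{-t})) : min u v ≤ t ≤ max u v }`. -/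
def wSup (u v : ℝ) : ℝ :=
  sSup {s | ∃ t ∈ Set.Icc (min u v) (max u v), s = 1 / (2 * (2 + Real.exp t + Real.exp (-t)))}

/-- The function `J` of Statement 19. -/
def Jfun (x y : ℝ) : ℝ :=
  (x + y) * Real.log (2 / (x + y)) + (2 - x - y) * Real.log (2 / (2 - x - y))
    - (x * Real.log (1 / x) + (1 - x) * Real.log (1 / (1 - x))
        + y * Real.log (1 / y) + (1 - y) * Real.log (1 / (1 - y)))

/-- The grid `G_{Q,d}` of points of `[0,1]^d` whose coordinates are odd multiples of
`1/(2Q)`. -/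
def oddGrid (d Qn : ℕ) : Set (Fin d → ℝ) :=
  {a | a ∈ cube d ∧ ∀ i, ∃ k : ℤ, Odd k ∧ a i = (k : ℝ) / (2 * (Qn : ℝ))}


private lemma log3_le_43 : Real.log 3 ≤ 4 / 3 := by
  rw [Real.log_le_iff_le_exp (by norm_num)]
  have h := Real.add_one_le_exp (1 / 3 : ℝ)
  have h4 : ((4 : ℝ) / 3) ^ 4 ≤ Real.exp (1 / 3) ^ 4 :=
    pow_le_pow_left₀ (by norm_num) (by linarith) 4
  have he : Real.exp (1 / 3) ^ 4 = Real.exp (4 / 3) := by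
    rw [← Real.exp_nat_mul]; norm_num
  nlinarith [h4, he]

private lemma abslog_le_two (t : ℝ) (h1 : 1 / 3 ≤ t) (h2 : t ≤ 3) : |Real.log t| ≤ 2 := by
  have ht : (0 : ℝ) < t := by linarith
  rw [abs_le]
  constructor
  · have h := Real.log_le_log (by norm_num) h1
    have h3 : Real.log (1 / 3) = -Real.log 3 := by rw [one_div, Real.log_inv]
    nlinarith [log3_le_43]
  · have h := Real.log_le_log ht h2
    nlinarith [log3_le_43]

private lemma key_bound (ε a b : ℝ) (hε : 0 < ε) (hε5 : ε ≤ 1 / 5) (ha : ε ≤ a)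
    (ha' : a ≤ 3 * ε) (hb : ε ≤ b) (hb' : b ≤ 3 * ε) :
    a * Real.log (a / b) ≤ 4 * ε ∧ (1 - a) * Real.log ((1 - a) / (1 - b)) ≤ 5 * ε := by
  have hbpos : 0 < b := lt_of_lt_of_le hε hb
  have hapos : 0 < a := lt_of_lt_of_le hε ha
  have h1b : (2 : ℝ) / 5 ≤ 1 - b := by linarith
  have h1a : 0 < 1 - a := by linarith
  constructor
  · rcases le_or_gt (Real.log (a / b)) 0 with h | h
    · nlinarith
    · have hr : a / b ≤ 3 := by rw [div_le_iff₀ hbpos]; nlinarith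
      have hl : Real.log (a / b) ≤ 4 / 3 :=
        le_trans (Real.log_le_log (by positivity) hr) log3_le_43
      nlinarith
  · rcases le_or_gt (Real.log ((1 - a) / (1 - b))) 0 with h | h
    · nlinarith
    · have hlog : Real.log ((1 - a) / (1 - b)) ≤ (1 - a) / (1 - b) - 1 :=
        Real.log_le_sub_one_of_pos (by positivity)
      have hq : (1 - a) / (1 - b) - 1 ≤ 5 * ε := by
        rw [div_sub_one (by linarith), div_le_iff₀ (by linarith)]
        nlinarith
      nlinarith

private lemma ratio_bounds (ε a b : ℝ) (hε : 0 < ε) (hε5 : ε ≤ 1 / 5) (ha : ε ≤ a)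
    (ha' : a ≤ 3 * ε) (hb : ε ≤ b) (hb' : b ≤ 3 * ε) :
    (1 / 3 ≤ a / b ∧ a / b ≤ 3) ∧ (1 / 3 ≤ (1 - a) / (1 - b) ∧ (1 - a) / (1 - b) ≤ 3) := by
  have hbpos : 0 < b := lt_of_lt_of_le hε hb
  have h1b : (0 : ℝ) < 1 - b := by linarith
  refine ⟨⟨?_, ?_⟩, ?_, ?_⟩
  · rw [le_div_iff₀ hbpos]; nlinarith
  · rw [div_le_iff₀ hbpos]; nlinarith
  · rw [le_div_iff₀ h1b]; nlinarith
  · rw [div_le_iff₀ h1b]; nlinarith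

private lemma map_withDensity'' {α β : Type*} [MeasurableSpace α] [MeasurableSpace β]
    (μ : Measure α) {e : α → β} (he : Measurable e) {g : β → ℝ≥0∞} (hg : Measurable g) :
    (μ.map e).withDensity g = (μ.withDensity fun x => g (e x)).map e := by
  ext s hs
  rw [withDensity_apply _ hs, setLIntegral_map hs hg he, Measure.map_apply he hs,
    withDensity_apply _ (he hs)]

private lemma wd_ofReal_mul {α : Type*} [MeasurableSpace α] (Q : Measure α) {a b : α → ℝ}
    (ham : Measurable a) (hbm : Measurable b) (hbne : ∀ x, b x ≠ 0) (hbnn : ∀ x, 0 ≤ b x) :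
    (Q.withDensity fun x => ENNReal.ofReal (b x)).withDensity
        (fun x => ENNReal.ofReal (a x / b x)) =
      Q.withDensity fun x => ENNReal.ofReal (a x) := by
  rw [← withDensity_mul _ hbm.ennreal_ofReal
    (show Measurable fun x => ENNReal.ofReal (a x / b x) from (ham.div hbm).ennreal_ofReal)]
  congr 1
  funext x
  show ENNReal.ofReal (b x) * ENNReal.ofReal (a x / b x) = ENNReal.ofReal (a x)
  rw [← ENNReal.ofReal_mul (hbnn x)]
  congr 1
  field_simp
  rw [mul_comm, mul_div_assoc, div_self (hbne x), mul_one]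

private lemma integral_wd_ofReal {α : Type*} [MeasurableSpace α] (Q : Measure α) {h : α → ℝ}
    (hm : Measurable h) (hnn : ∀ x, 0 ≤ h x) (f : α → ℝ) :
    ∫ x, f x ∂(Q.withDensity fun x => ENNReal.ofReal (h x)) = ∫ x, h x * f x ∂Q := by
  have hrw : (fun x => ENNReal.ofReal (h x))
      = fun x => ((Real.toNNReal (h x) : ℝ≥0) : ℝ≥0∞) := rfl
  rw [hrw, integral_withDensity_eq_integral_smul hm.real_toNNReal f]
  congr 1
  funext x
  rw [NNReal.smul_def, Real.coe_toNNReal _ (hnn x), smul_eq_mul]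

/-- Lemma: KL divergence bound `KL(P_{η₁,Q} ‖ P_{η₂,Q}) ≤ 9ε`; the
conclusion states absolute continuity together with the bound on `∫ log(dP₁/dP₂) dP₁`,
which together amount to `KL ≤ 9ε`. -/
theorem statement18 (ε : ℝ) (hε : ε ∈ Set.Ioc (0 : ℝ) (1 / 5)) (d : ℕ) (hd : 0 < d)
    (Q : Measure (Fin d → ℝ)) [IsProbabilityMeasure Q] (hQ : Q (cube d) = 1)
    (η₁ η₂ : (Fin d → ℝ) → ℝ) (h1m : Measurable η₁) (h2m : Measurable η₂)
    (h1r : ∀ x, η₁ x ∈ Set.Icc ε (3 * ε)) (h2r : ∀ x, η₂ x ∈ Set.Icc ε (3 * ε)) :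
    PeQ d Q η₁ ≪ PeQ d Q η₂ ∧
    ∫ z, Real.log ((PeQ d Q η₁).rnDeriv (PeQ d Q η₂) z).toReal ∂(PeQ d Q η₁) ≤ 9 * ε := by
  obtain ⟨hε0, hε5⟩ := hε
  have h1l : ∀ x, ε ≤ η₁ x := fun x => (h1r x).1
  have h1u : ∀ x, η₁ x ≤ 3 * ε := fun x => (h1r x).2
  have h2l : ∀ x, ε ≤ η₂ x := fun x => (h2r x).1
  have h2u : ∀ x, η₂ x ≤ 3 * ε := fun x => (h2r x).2
  have h2pos : ∀ x, 0 < η₂ x := fun x => lt_of_lt_of_le hε0 (h2l x)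
  have h1pos : ∀ x, 0 < η₁ x := fun x => lt_of_lt_of_le hε0 (h1l x)
  have h2lt1 : ∀ x, η₂ x < 1 := fun x => lt_of_le_of_lt (h2u x) (by linarith)
  have h1lt1 : ∀ x, η₁ x < 1 := fun x => lt_of_le_of_lt (h1u x) (by linarith)
  set g : ((Fin d → ℝ) × ℝ) → ℝ≥0∞ := fun z =>
    if z.2 = 1 then ENNReal.ofReal (η₁ z.1 / η₂ z.1)
    else ENNReal.ofReal ((1 - η₁ z.1) / (1 - η₂ z.1)) with hgdef
  have hgm : Measurable g := by
    apply Measurable.ite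
    · exact measurable_snd (measurableSet_singleton (1 : ℝ))
    · exact ENNReal.measurable_ofReal.comp
        ((h1m.comp measurable_fst).div (h2m.comp measurable_fst))
    · exact ENNReal.measurable_ofReal.comp
        (((measurable_const.sub (h1m.comp measurable_fst))).div
          (measurable_const.sub (h2m.comp measurable_fst)))
  have hg1 : ∀ x : Fin d → ℝ, g (x, (1 : ℝ)) = ENNReal.ofReal (η₁ x / η₂ x) := by
    intro x; simp [hgdef]
  have hg2 : ∀ x : Fin d → ℝ, g (x, (-1 : ℝ)) = ENNReal.ofReal ((1 - η₁ x) / (1 - η₂ x)) := by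
    intro x; simp [hgdef]; norm_num
  have he₁ : Measurable fun x : Fin d → ℝ => (x, (1 : ℝ)) :=
    measurable_id.prodMk measurable_const
  have he₂ : Measurable fun x : Fin d → ℝ => (x, (-1 : ℝ)) :=
    measurable_id.prodMk measurable_const
  -- Step 1: `PeQ d Q η₁ = (PeQ d Q η₂).withDensity g`
  have heq : PeQ d Q η₁ = (PeQ d Q η₂).withDensity g := by
    unfold PeQ
    rw [withDensity_add_measure, map_withDensity'' _ he₁ hgm, map_withDensity'' _ he₂ hgm]
    congr 1
    · congr 1
      have hfun : (fun x : Fin d → ℝ => g (x, (1 : ℝ)))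
          = fun x => ENNReal.ofReal (η₁ x / η₂ x) := funext fun x => hg1 x
      rw [hfun, wd_ofReal_mul Q h1m h2m (fun x => (h2pos x).ne') (fun x => (h2pos x).le)]
    · congr 1
      have hfun : (fun x : Fin d → ℝ => g (x, (-1 : ℝ)))
          = fun x => ENNReal.ofReal ((1 - η₁ x) / (1 - η₂ x)) := funext fun x => hg2 x
      rw [hfun, wd_ofReal_mul Q (show Measurable fun x => 1 - η₁ x from measurable_const.sub h1m)
        (show Measurable fun x => 1 - η₂ x from measurable_const.sub h2m)
        (fun x => by have := h2lt1 x; intro hc; nlinarith [hc])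
        (fun x => by have := h2lt1 x; linarith)]
  have hac : PeQ d Q η₁ ≪ PeQ d Q η₂ := by
    rw [heq]; exact withDensity_absolutelyContinuous _ _
  refine ⟨hac, ?_⟩
  -- finiteness
  have hfin : ∀ h : (Fin d → ℝ) → ℝ, (∀ x, h x ≤ 1) →
      IsFiniteMeasure (Q.withDensity fun x => ENNReal.ofReal (h x)) := by
    intro h hle
    apply isFiniteMeasure_withDensity
    have : ∫⁻ x, ENNReal.ofReal (h x) ∂Q ≤ ∫⁻ _, 1 ∂Q :=
      lintegral_mono fun x => ENNReal.ofReal_le_one.mpr (hle x)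
    simp only [lintegral_one, measure_univ] at this
    exact ne_top_of_le_ne_top ENNReal.one_ne_top this
  haveI hf1 : IsFiniteMeasure (Q.withDensity fun x => ENNReal.ofReal (η₁ x)) :=
    hfin η₁ fun x => by have := h1u x; linarith
  haveI hf1' : IsFiniteMeasure (Q.withDensity fun x => ENNReal.ofReal (1 - η₁ x)) :=
    hfin _ fun x => by have := h1pos x; linarith
  haveI hf2 : IsFiniteMeasure (Q.withDensity fun x => ENNReal.ofReal (η₂ x)) :=
    hfin η₂ fun x => by have := h2u x; linarith
  haveI hf2' : IsFiniteMeasure (Q.withDensity fun x => ENNReal.ofReal (1 - η₂ x)) :=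
    hfin _ fun x => by have := h2pos x; linarith
  haveI hPf2 : IsFiniteMeasure (PeQ d Q η₂) := by unfold PeQ; infer_instance
  -- Step 2: identify the Radon–Nikodym derivative
  have hrn : (PeQ d Q η₁).rnDeriv (PeQ d Q η₂) =ᵐ[PeQ d Q η₂] g := by
    rw [heq]; exact Measure.rnDeriv_withDensity _ hgm
  have hrn1 : (PeQ d Q η₁).rnDeriv (PeQ d Q η₂) =ᵐ[PeQ d Q η₁] g := hac.ae_eq hrn
  have hint_congr : ∫ z, Real.log ((PeQ d Q η₁).rnDeriv (PeQ d Q η₂) z).toReal ∂(PeQ d Q η₁)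
      = ∫ z, Real.log ((g z).toReal) ∂(PeQ d Q η₁) :=
    integral_congr_ae (by filter_upwards [hrn1] with z hz; rw [hz])
  rw [hint_congr]
  -- Step 3: compute the integral
  set F : ((Fin d → ℝ) × ℝ) → ℝ := fun z => Real.log ((g z).toReal) with hFdef
  have hFm : Measurable F := (ENNReal.measurable_toReal.comp hgm).log
  have hF1 : ∀ x : Fin d → ℝ, F (x, (1 : ℝ)) = Real.log (η₁ x / η₂ x) := by
    intro x
    rw [hFdef]
    simp only [hg1 x]
    rw [ENNReal.toReal_ofReal (div_nonneg (h1pos x).le (h2pos x).le)]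
  have hF2 : ∀ x : Fin d → ℝ, F (x, (-1 : ℝ)) = Real.log ((1 - η₁ x) / (1 - η₂ x)) := by
    intro x
    rw [hFdef]
    simp only [hg2 x]
    rw [ENNReal.toReal_ofReal (div_nonneg (by have := h1lt1 x; linarith)
      (by have := h2lt1 x; linarith))]
  have hrb := fun x => ratio_bounds ε (η₁ x) (η₂ x) hε0 hε5 (h1l x) (h1u x) (h2l x) (h2u x)
  have hbd1 : ∀ x : Fin d → ℝ, |Real.log (η₁ x / η₂ x)| ≤ 2 :=
    fun x => abslog_le_two _ (hrb x).1.1 (hrb x).1.2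
  have hbd2 : ∀ x : Fin d → ℝ, |Real.log ((1 - η₁ x) / (1 - η₂ x))| ≤ 2 :=
    fun x => abslog_le_two _ (hrb x).2.1 (hrb x).2.2
  have hm1 : Measurable fun x => Real.log (η₁ x / η₂ x) := (h1m.div h2m).log
  have hm2 : Measurable fun x => Real.log ((1 - η₁ x) / (1 - η₂ x)) :=
    ((measurable_const.sub h1m).div (measurable_const.sub h2m)).log
  have hIμ1 : Integrable F ((Q.withDensity fun x => ENNReal.ofReal (η₁ x)).map
      (fun x => (x, (1 : ℝ)))) := by
    rw [integrable_map_measure hFm.aestronglyMeasurable he₁.aemeasurable]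
    have : (F ∘ fun x : Fin d → ℝ => (x, (1 : ℝ))) = fun x => Real.log (η₁ x / η₂ x) :=
      funext fun x => hF1 x
    rw [this]
    exact (integrable_const 2).mono' hm1.aestronglyMeasurable
      (Filter.Eventually.of_forall fun x => by simpa using hbd1 x)
  have hIμ2 : Integrable F ((Q.withDensity fun x => ENNReal.ofReal (1 - η₁ x)).map
      (fun x => (x, (-1 : ℝ)))) := by
    rw [integrable_map_measure hFm.aestronglyMeasurable he₂.aemeasurable]
    have : (F ∘ fun x : Fin d → ℝ => (x, (-1 : ℝ)))
        = fun x => Real.log ((1 - η₁ x) / (1 - η₂ x)) := funext fun x => hF2 x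
    rw [this]
    exact (integrable_const 2).mono' hm2.aestronglyMeasurable
      (Filter.Eventually.of_forall fun x => by simpa using hbd2 x)
  have hsplit : ∫ z, F z ∂(PeQ d Q η₁)
      = (∫ z, F z ∂((Q.withDensity fun x => ENNReal.ofReal (η₁ x)).map
            (fun x => (x, (1 : ℝ)))))
        + ∫ z, F z ∂((Q.withDensity fun x => ENNReal.ofReal (1 - η₁ x)).map
            (fun x => (x, (-1 : ℝ)))) := by
    unfold PeQ
    exact integral_add_measure hIμ1 hIμ2
  have hA : (∫ z, F z ∂((Q.withDensity fun x => ENNReal.ofReal (η₁ x)).map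
      (fun x => (x, (1 : ℝ))))) = ∫ x, η₁ x * Real.log (η₁ x / η₂ x) ∂Q := by
    rw [integral_map he₁.aemeasurable hFm.aestronglyMeasurable]
    rw [show (fun x : Fin d → ℝ => F (x, (1 : ℝ))) = fun x => Real.log (η₁ x / η₂ x) from
      funext fun x => hF1 x]
    exact integral_wd_ofReal Q h1m (fun x => (h1pos x).le) _
  have hB : (∫ z, F z ∂((Q.withDensity fun x => ENNReal.ofReal (1 - η₁ x)).map
      (fun x => (x, (-1 : ℝ))))) = ∫ x, (1 - η₁ x) * Real.log ((1 - η₁ x) / (1 - η₂ x)) ∂Q := by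
    rw [integral_map he₂.aemeasurable hFm.aestronglyMeasurable]
    rw [show (fun x : Fin d → ℝ => F (x, (-1 : ℝ)))
        = fun x => Real.log ((1 - η₁ x) / (1 - η₂ x)) from funext fun x => hF2 x]
    exact integral_wd_ofReal Q (show Measurable fun x => 1 - η₁ x from measurable_const.sub h1m)
      (fun x => by have := h1lt1 x; linarith) _
  have hkey := fun x => key_bound ε (η₁ x) (η₂ x) hε0 hε5 (h1l x) (h1u x) (h2l x) (h2u x)
  have hIA : Integrable (fun x => η₁ x * Real.log (η₁ x / η₂ x)) Q := by
    refine (integrable_const 2).mono' (h1m.mul hm1).aestronglyMeasurable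
      (Filter.Eventually.of_forall fun x => ?_)
    have h1 : |η₁ x| ≤ 1 := by
      rw [abs_le]; constructor <;> [have := h1pos x; have := h1lt1 x] <;> linarith
    calc ‖η₁ x * Real.log (η₁ x / η₂ x)‖ = |η₁ x| * |Real.log (η₁ x / η₂ x)| := abs_mul _ _
      _ ≤ 1 * 2 := mul_le_mul h1 (hbd1 x) (abs_nonneg _) zero_le_one
      _ = 2 := by norm_num
  have hIB : Integrable (fun x => (1 - η₁ x) * Real.log ((1 - η₁ x) / (1 - η₂ x))) Q := by
    refine (integrable_const 2).mono'
      ((measurable_const.sub h1m).mul hm2).aestronglyMeasurable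
      (Filter.Eventually.of_forall fun x => ?_)
    have h1 : |1 - η₁ x| ≤ 1 := by
      rw [abs_le]; constructor <;> [have := h1lt1 x; have := h1pos x] <;> linarith
    calc ‖(1 - η₁ x) * Real.log ((1 - η₁ x) / (1 - η₂ x))‖
        = |1 - η₁ x| * |Real.log ((1 - η₁ x) / (1 - η₂ x))| := abs_mul _ _
      _ ≤ 1 * 2 := mul_le_mul h1 (hbd2 x) (abs_nonneg _) zero_le_one
      _ = 2 := by norm_num
  have hle1 : ∫ x, η₁ x * Real.log (η₁ x / η₂ x) ∂Q ≤ 4 * ε := by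
    calc ∫ x, η₁ x * Real.log (η₁ x / η₂ x) ∂Q ≤ ∫ _, 4 * ε ∂Q :=
          integral_mono hIA (integrable_const _) fun x => (hkey x).1
      _ = 4 * ε := by simp [measure_univ]
  have hle2 : ∫ x, (1 - η₁ x) * Real.log ((1 - η₁ x) / (1 - η₂ x)) ∂Q ≤ 5 * ε := by
    calc ∫ x, (1 - η₁ x) * Real.log ((1 - η₁ x) / (1 - η₂ x)) ∂Q ≤ ∫ _, 5 * ε ∂Q :=
          integral_mono hIB (integrable_const _) fun x => (hkey x).2
      _ = 5 * ε := by simp [measure_univ]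
  calc ∫ z, F z ∂(PeQ d Q η₁) = _ + _ := hsplit
    _ ≤ 4 * ε + 5 * ε := by rw [hA, hB]; exact add_le_add hle1 hle2
    _ = 9 * ε := by ring


end

end DNNLogistic
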